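/- Suppose β̃ ≥ 2 and β̃_k ≤ 1 for all k (which holds when K_0 ≥ β̃). Then for all k ≥ 0, E[‖U_k‖²] ≤ (6ζ²σ²/(1−δ))·k^{1−δ}·β̃_k ≤ (6ζσ²/(1−δ))·β/(k+K_0)^δ. -/

import Mathlib

set_option linter.unusedSectionVars false
set_option maxHeartbeats 1000000

open MeasureTheory ProbabilityTheory
open scoped ProbabilityTheory RealInnerProductSpace

open Finset

lemma mvt_step {δ : ℝ} (hδ0 : 0 < δ) (hδ1 : δ < 1) (x : ℝ) (hx : 0 ≤ x) :
    (1 - δ) * (x + 1) ^ (-δ) ≤ (x + 1) ^ (1 - δ) - x ^ (1 - δ) := by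
  rcases eq_or_lt_of_le hx with h0 | hx
  · rw [← h0]
    rw [Real.zero_rpow (by linarith), zero_add, Real.one_rpow, Real.one_rpow]
    linarith
  · have hx1 : x < x + 1 := by linarith
    obtain ⟨c, hc, hc2⟩ := exists_hasDerivAt_eq_slope (fun y => y ^ (1 - δ))
      (fun y => (1 - δ) * y ^ (-δ)) hx1
      (by
        apply ContinuousOn.rpow_const continuousOn_id
        intro y hy
        exact Or.inl (by simp only [id]; rcases hy with ⟨h1, _⟩; nlinarith))
      (fun y hy => by
        have hy0 : y ≠ 0 := by rcases hy with ⟨h1, _⟩; exact ne_of_gt (lt_trans hx h1)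
        have := Real.hasDerivAt_rpow_const (x := y) (p := 1 - δ) (Or.inl hy0)
        have he : 1 - δ - 1 = -δ := by ring
        rwa [he] at this)
    have hcpos : 0 < c := lt_trans hx hc.1
    have : (x + 1) ^ (-δ) ≤ c ^ (-δ) :=
      Real.rpow_le_rpow_of_nonpos hcpos hc.2.le (by linarith)
    have h2 : (1 - δ) * c ^ (-δ) = (x + 1) ^ (1 - δ) - x ^ (1 - δ) := by
      rw [hc2]; field_simp; ring
    nlinarith


open Finset

lemma sum_rpow_le {δ : ℝ} (hδ0 : 0 < δ) (hδ1 : δ < 1) (k : ℕ) :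
    ∑ h ∈ range k, ((h : ℝ) + 1) ^ (-δ) ≤ (k : ℝ) ^ (1 - δ) / (1 - δ) := by
  induction k with
  | zero => simp [Real.zero_rpow (show (1:ℝ) - δ ≠ 0 by linarith)]
  | succ k ih =>
    rw [sum_range_succ]
    have h1 := mvt_step hδ0 hδ1 (k : ℝ) (Nat.cast_nonneg k)
    have h2 : ((k : ℝ) + 1) ^ (-δ) ≤ (((k+1 : ℕ) : ℝ) ^ (1 - δ) - (k : ℝ) ^ (1 - δ)) / (1 - δ) := by
      rw [le_div_iff₀ (by linarith)]
      push_cast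
      nlinarith
    have := add_le_add ih h2
    rw [← add_div, show (k : ℝ) ^ (1 - δ) + (((k+1 : ℕ) : ℝ) ^ (1 - δ) - (k : ℝ) ^ (1 - δ)) = ((k+1 : ℕ) : ℝ) ^ (1 - δ) from by ring] at this
    exact this

lemma dist_sum_le {δ : ℝ} (hδ0 : 0 < δ) (hδ1 : δ < 1) {i k : ℕ} (hik : i < k) :
    ∑ l ∈ range k, ((1 : ℝ) + (Nat.dist i l : ℝ)) ^ (-δ)
      ≤ 2 * ((k : ℝ) ^ (1 - δ) / (1 - δ)) := by
  have hbase : ∀ h : ℕ, ((1 : ℝ) + (h : ℝ)) = ((h : ℝ) + 1) := fun h => by ring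
  have hsplit : range k = Finset.Ico 0 (i+1) ∪ Finset.Ico (i+1) k := by
    rw [range_eq_Ico, ← Finset.Ico_union_Ico_eq_Ico (Nat.zero_le _) hik]
  have hterm_nonneg : ∀ l, (0:ℝ) ≤ ((1 : ℝ) + (Nat.dist i l : ℝ)) ^ (-δ) :=
    fun l => Real.rpow_nonneg (by positivity) _
  rw [hsplit, Finset.sum_union (by
    apply Finset.Ico_disjoint_Ico_consecutive)]
  have hA : ∑ l ∈ Finset.Ico 0 (i+1), ((1 : ℝ) + (Nat.dist i l : ℝ)) ^ (-δ)
      ≤ (k : ℝ) ^ (1 - δ) / (1 - δ) := by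
    have : ∑ l ∈ Finset.Ico 0 (i+1), ((1 : ℝ) + (Nat.dist i l : ℝ)) ^ (-δ)
        = ∑ h ∈ range (i+1), ((h : ℝ) + 1) ^ (-δ) := by
      rw [Nat.Ico_zero_eq_range,
        ← Finset.sum_range_reflect (fun h => ((h : ℝ) + 1) ^ (-δ)) (i+1)]
      apply Finset.sum_congr rfl
      intro l hl
      simp only [mem_range] at hl
      have hd : Nat.dist i l = i + 1 - 1 - l := by
        rw [Nat.dist_eq_sub_of_le_right (by omega)]
        omega
      rw [hd]
      norm_num
      rw [show (1 : ℝ) + ↑(i - l) = ↑(i - l) + 1 from by ring]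
    rw [this]
    calc ∑ h ∈ range (i+1), ((h : ℝ) + 1) ^ (-δ)
        ≤ ∑ h ∈ range k, ((h : ℝ) + 1) ^ (-δ) := by
          apply Finset.sum_le_sum_of_subset_of_nonneg
          · exact Finset.range_subset_range.mpr hik
          · intro h _ _; exact Real.rpow_nonneg (by positivity) _
      _ ≤ _ := sum_rpow_le hδ0 hδ1 k
  have hB : ∑ l ∈ Finset.Ico (i+1) k, ((1 : ℝ) + (Nat.dist i l : ℝ)) ^ (-δ)
      ≤ (k : ℝ) ^ (1 - δ) / (1 - δ) := by
    rw [Finset.sum_Ico_eq_sum_range]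
    calc ∑ j ∈ range (k - (i+1)), ((1 : ℝ) + (Nat.dist i (i + 1 + j) : ℝ)) ^ (-δ)
        ≤ ∑ j ∈ range (k - (i+1)), ((j : ℝ) + 1) ^ (-δ) := by
          apply Finset.sum_le_sum
          intro j _
          have hd : Nat.dist i (i + 1 + j) = j + 1 := by
            rw [Nat.dist_eq_sub_of_le (by omega)]; omega
          rw [hd]
          apply Real.rpow_le_rpow_of_nonpos (by positivity) (by push_cast; linarith) (by linarith)
      _ ≤ ∑ h ∈ range k, ((h : ℝ) + 1) ^ (-δ) := by
          apply Finset.sum_le_sum_of_subset_of_nonneg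
          · exact Finset.range_subset_range.mpr (Nat.sub_le _ _)
          · intro h _ _; exact Real.rpow_nonneg (by positivity) _
      _ ≤ _ := sum_rpow_le hδ0 hδ1 k
  linarith
open Finset in
noncomputable def wgt (bt K0 : ℝ) (i k : ℕ) : ℝ :=
  (bt / ((i : ℝ) + K0)) * ∏ j ∈ Finset.Ico (i+1) k, (1 - bt / ((j : ℝ) + K0))

section wgtlem
open Finset
variable {bt K0 : ℝ} (hbt : 1 ≤ bt) (hK0 : 0 < K0)
  (hstep : ∀ j : ℕ, bt / ((j : ℝ) + K0) ≤ 1)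

include hbt hK0 hstep

lemma factor_mem (j : ℕ) : 0 ≤ 1 - bt / ((j : ℝ) + K0) := by linarith [hstep j]

lemma b_nonneg (j : ℕ) : 0 ≤ bt / ((j : ℝ) + K0) := by
  apply div_nonneg (by linarith)
  positivity

lemma wgt_nonneg (i k : ℕ) : 0 ≤ wgt bt K0 i k := by
  apply mul_nonneg (b_nonneg hbt hK0 hstep i)
  exact Finset.prod_nonneg fun j _ => factor_mem hbt hK0 hstep j

lemma wgt_succ_lt {i k : ℕ} (h : i < k) :
    wgt bt K0 i (k+1) = wgt bt K0 i k * (1 - bt / ((k : ℝ) + K0)) := by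
  unfold wgt
  rw [Finset.prod_Ico_succ_top h, mul_assoc]

lemma wgt_self (k : ℕ) : wgt bt K0 k (k+1) = bt / ((k : ℝ) + K0) := by
  unfold wgt
  simp

lemma wgt_sum_le_one (k : ℕ) : ∑ i ∈ range k, wgt bt K0 i k ≤ 1 := by
  have key : ∀ k : ℕ, ∑ i ∈ range k, wgt bt K0 i k
      = 1 - ∏ j ∈ range k, (1 - bt / ((j : ℝ) + K0)) := by
    intro k
    induction k with
    | zero => simp
    | succ k ih =>
      rw [Finset.sum_range_succ, Finset.prod_range_succ, wgt_self hbt hK0 hstep]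
      have : ∀ i ∈ range k, wgt bt K0 i (k+1) = wgt bt K0 i k * (1 - bt / ((k : ℝ) + K0)) := by
        intro i hi
        exact wgt_succ_lt hbt hK0 hstep (mem_range.mp hi)
      rw [Finset.sum_congr rfl this, ← Finset.sum_mul, ih]
      ring
  rw [key k]
  have : 0 ≤ ∏ j ∈ range k, (1 - bt / ((j : ℝ) + K0)) :=
    Finset.prod_nonneg fun j _ => factor_mem hbt hK0 hstep j
  linarith

lemma wgt_le_aux : ∀ (n i k : ℕ), i + n + 1 = k →
    wgt bt K0 i k ≤ bt / ((k : ℝ) - 1 + K0) := by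
  intro n
  induction n with
  | zero =>
    intro i k hk
    subst hk
    rw [wgt_self hbt hK0 hstep]
    have : ((i + 1 + 0 : ℕ) : ℝ) - 1 + K0 = (i : ℝ) + K0 := by push_cast; ring
    rw [this]
  | succ n ih =>
    intro i k hk
    have hik : i + 1 < k := by omega
    have key : wgt bt K0 i k ≤ wgt bt K0 (i+1) k := by
      unfold wgt
      rw [Finset.prod_eq_prod_Ico_succ_bot hik]
      have hprod : 0 ≤ ∏ j ∈ Finset.Ico (i+1+1) k, (1 - bt / ((j : ℝ) + K0)) :=
        Finset.prod_nonneg fun j _ => factor_mem hbt hK0 hstep j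
      rw [← mul_assoc]
      apply mul_le_mul_of_nonneg_right _ hprod
      -- bt/(i+K0) * (1 - bt/(i+1+K0)) ≤ bt/(i+1+K0)
      have hx : (0:ℝ) < (i : ℝ) + K0 := by positivity
      have hy : (0:ℝ) < ((i+1 : ℕ) : ℝ) + K0 := by positivity
      rw [div_mul_eq_mul_div, div_le_div_iff₀ hx hy]
      have hcast : ((i+1 : ℕ) : ℝ) = (i : ℝ) + 1 := by push_cast; ring
      rw [hcast] at hy ⊢
      have h1 : bt * (1 - bt / ((i : ℝ) + 1 + K0)) * ((i : ℝ) + 1 + K0)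
          = bt * ((i : ℝ) + 1 + K0) - bt * bt := by
        field_simp
      rw [h1]
      nlinarith
    exact key.trans (ih (i+1) k (by omega))

lemma wgt_le {i k : ℕ} (hik : i < k) (hK2 : 2 ≤ K0) :
    wgt bt K0 i k ≤ 2 * (bt / ((k : ℝ) + K0)) := by
  have h1 : wgt bt K0 i k ≤ bt / ((k : ℝ) - 1 + K0) :=
    wgt_le_aux hbt hK0 hstep (k - i - 1) i k (by omega)
  have hk1 : (1 : ℝ) ≤ (k : ℝ) := by
    have : 1 ≤ k := by omega
    exact_mod_cast this
  apply h1.trans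
  rw [show 2 * (bt / ((k : ℝ) + K0)) = (2 * bt) / ((k : ℝ) + K0) from by ring,
    div_le_div_iff₀ (by linarith) (by positivity)]
  nlinarith

end wgtlem
open Finset in
/-- Let `{η_k}` be a zero-mean, weakly stationary process in `ℝ^d` with
autocovariance `γ(|j−i|) = E[⟨η_i, η_j⟩]` satisfying `|γ(h)| ≤ σ²(1+h)^{−δ}`,
`δ ∈ (0,1)`. With `β̃ = β/ζ`, `β̃_k = β̃/(k+K₀)`, `η̃_k = −ζη_k` and averaged
noise `U₀ = 0`, `U_{k+1} = (1−β̃_k)U_k + β̃_k η̃_k`: if `β̃ ≥ 2` and `β̃_k ≤ 1`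
for all `k`, then for all `k`,
`E[‖U_k‖²] ≤ (6ζ²σ²/(1−δ))·k^{1−δ}·β̃_k ≤ (6ζσ²/(1−δ))·β/(k+K₀)^δ`. -/
theorem stmt_9 {d : ℕ} {Ω : Type*} [MeasureSpace Ω]
    [IsProbabilityMeasure (ℙ : Measure Ω)]
    (ζ β K0 σ δ : ℝ) (hζ : 0 < ζ) (hβpos : 0 < β) (hK0pos : 0 < K0)
    (hσ : 0 < σ) (hδ0 : 0 < δ) (hδ1 : δ < 1)
    (η U : ℕ → Ω → EuclideanSpace ℝ (Fin d)) (γ : ℕ → ℝ)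
    (hmeas : ∀ k, Measurable (η k))
    (hint : ∀ k, Integrable (η k) (ℙ : Measure Ω))
    (hmean : ∀ k, ∫ ω, η k ω ∂(ℙ : Measure Ω) = 0)
    (hintcov : ∀ i j, Integrable (fun ω => ⟪η i ω, η j ω⟫) (ℙ : Measure Ω))
    (hcov : ∀ i j : ℕ, ∫ ω, ⟪η i ω, η j ω⟫ ∂(ℙ : Measure Ω) = γ (Nat.dist i j))
    (hγ : ∀ h : ℕ, |γ h| ≤ σ ^ 2 * ((1 : ℝ) + (h : ℝ)) ^ (-δ))
    (hU0 : ∀ ω, U 0 ω = 0)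
    (hUrec : ∀ (k : ℕ) (ω : Ω),
      U (k + 1) ω = (1 - (β / ζ) / ((k : ℝ) + K0)) • U k ω
        + ((β / ζ) / ((k : ℝ) + K0)) • (-ζ • η k ω))
    (hβ : β / ζ ≥ 2)
    (hstep : ∀ k : ℕ, (β / ζ) / ((k : ℝ) + K0) ≤ 1) :
    ∀ k : ℕ,
      (∫ ω, ‖U k ω‖ ^ 2 ∂(ℙ : Measure Ω)
          ≤ (6 * ζ ^ 2 * σ ^ 2 / (1 - δ)) * (k : ℝ) ^ (1 - δ)
              * ((β / ζ) / ((k : ℝ) + K0))) ∧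
        (6 * ζ ^ 2 * σ ^ 2 / (1 - δ)) * (k : ℝ) ^ (1 - δ) * ((β / ζ) / ((k : ℝ) + K0))
          ≤ (6 * ζ * σ ^ 2 / (1 - δ)) * (β / ((k : ℝ) + K0) ^ δ) := by
  set bt := β / ζ with hbtdef
  have hbt : 1 ≤ bt := by linarith [hβ]
  have hδ' : (0 : ℝ) < 1 - δ := by linarith
  have hK2 : 2 ≤ K0 := by
    have h0 := hstep 0
    rw [Nat.cast_zero, zero_add, div_le_one hK0pos] at h0
    linarith [hβ]
  -- representation of U
  have hrep : ∀ (k : ℕ) (ω : Ω),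
      U k ω = ∑ i ∈ range k, wgt bt K0 i k • ((-ζ) • η i ω) := by
    intro k
    induction k with
    | zero => intro ω; simp [hU0 ω]
    | succ k ih =>
      intro ω
      rw [hUrec k ω, ih ω, Finset.sum_range_succ, wgt_self hbt hK0pos hstep,
        Finset.smul_sum]
      congr 1
      apply Finset.sum_congr rfl
      intro i hi
      rw [wgt_succ_lt hbt hK0pos hstep (mem_range.mp hi), smul_smul, mul_comm]
  intro k
  constructor
  · -- main bound
    rcases Nat.eq_zero_or_pos k with hk0 | hkpos
    · subst hk0
      have h0 : (fun ω => ‖U 0 ω‖ ^ 2) = fun _ : Ω => (0 : ℝ) := by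
        funext ω; rw [hU0 ω]; simp
      rw [h0, integral_zero]
      simp [Real.zero_rpow (show (1 : ℝ) - δ ≠ 0 by linarith)]
    · -- k ≥ 1
      set c : ℕ → ℕ → ℝ := fun i l => wgt bt K0 i k * wgt bt K0 l k * ζ ^ 2 with hc
      have hcnn : ∀ i l, 0 ≤ c i l := fun i l =>
        mul_nonneg (mul_nonneg (wgt_nonneg hbt hK0pos hstep i k)
          (wgt_nonneg hbt hK0pos hstep l k)) (sq_nonneg ζ)
      have hnormsq : ∀ ω, ‖U k ω‖ ^ 2
          = ∑ i ∈ range k, ∑ l ∈ range k, c i l * ⟪η i ω, η l ω⟫ := by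
        intro ω
        rw [← real_inner_self_eq_norm_sq, hrep k ω, sum_inner]
        apply Finset.sum_congr rfl
        intro i _
        rw [inner_sum]
        apply Finset.sum_congr rfl
        intro l _
        rw [real_inner_smul_left, real_inner_smul_right, real_inner_smul_left,
          real_inner_smul_right]
        simp only [hc]
        ring
      have hEq : ∫ ω, ‖U k ω‖ ^ 2 ∂(ℙ : Measure Ω)
          = ∑ i ∈ range k, ∑ l ∈ range k, c i l * γ (Nat.dist i l) := by
        rw [show (fun ω => ‖U k ω‖ ^ 2)
            = fun ω => ∑ i ∈ range k, ∑ l ∈ range k, c i l * ⟪η i ω, η l ω⟫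
            from funext hnormsq]
        rw [integral_finset_sum _ (fun i _ =>
          integrable_finset_sum _ (fun l _ => (hintcov i l).const_mul _))]
        apply Finset.sum_congr rfl
        intro i _
        rw [integral_finset_sum _ (fun l _ => (hintcov i l).const_mul _)]
        apply Finset.sum_congr rfl
        intro l _
        rw [integral_const_mul, hcov]
      rw [hEq]
      set M : ℝ := 2 * (bt / ((k : ℝ) + K0)) * (2 * ((k : ℝ) ^ (1 - δ) / (1 - δ))) with hM
      have hMnn : 0 ≤ M := by
        apply mul_nonneg (mul_nonneg (by norm_num) (b_nonneg hbt hK0pos hstep k))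
        apply mul_nonneg (by norm_num)
        apply div_nonneg (Real.rpow_nonneg (Nat.cast_nonneg k) _) (by linarith)
      have key : ∑ i ∈ range k, ∑ l ∈ range k, c i l * γ (Nat.dist i l)
          ≤ ζ ^ 2 * σ ^ 2 * M := by
        calc ∑ i ∈ range k, ∑ l ∈ range k, c i l * γ (Nat.dist i l)
            ≤ ∑ i ∈ range k, ∑ l ∈ range k,
                c i l * (σ ^ 2 * ((1 : ℝ) + (Nat.dist i l : ℝ)) ^ (-δ)) := by
              apply Finset.sum_le_sum; intro i _
              apply Finset.sum_le_sum; intro l _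
              exact mul_le_mul_of_nonneg_left
                (le_trans (le_abs_self _) (hγ _)) (hcnn i l)
          _ = ζ ^ 2 * σ ^ 2 * ∑ i ∈ range k, wgt bt K0 i k *
                ∑ l ∈ range k, wgt bt K0 l k * ((1 : ℝ) + (Nat.dist i l : ℝ)) ^ (-δ) := by
              rw [Finset.mul_sum]
              apply Finset.sum_congr rfl
              intro i _
              rw [Finset.mul_sum, Finset.mul_sum]
              apply Finset.sum_congr rfl
              intro l _
              simp only [hc]; ring
          _ ≤ ζ ^ 2 * σ ^ 2 * ∑ i ∈ range k, wgt bt K0 i k * M := by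
              apply mul_le_mul_of_nonneg_left _ (by positivity)
              apply Finset.sum_le_sum
              intro i hi
              apply mul_le_mul_of_nonneg_left _ (wgt_nonneg hbt hK0pos hstep i k)
              calc ∑ l ∈ range k, wgt bt K0 l k * ((1 : ℝ) + (Nat.dist i l : ℝ)) ^ (-δ)
                  ≤ ∑ l ∈ range k, (2 * (bt / ((k : ℝ) + K0)))
                      * ((1 : ℝ) + (Nat.dist i l : ℝ)) ^ (-δ) := by
                    apply Finset.sum_le_sum
                    intro l hl
                    exact mul_le_mul_of_nonneg_right
                      (wgt_le hbt hK0pos hstep (mem_range.mp hl) hK2)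
                      (Real.rpow_nonneg (by positivity) _)
                _ = (2 * (bt / ((k : ℝ) + K0)))
                      * ∑ l ∈ range k, ((1 : ℝ) + (Nat.dist i l : ℝ)) ^ (-δ) := by
                    rw [Finset.mul_sum]
                _ ≤ M := by
                    rw [hM]
                    apply mul_le_mul_of_nonneg_left
                      (dist_sum_le hδ0 hδ1 (mem_range.mp hi))
                      (mul_nonneg (by norm_num) (b_nonneg hbt hK0pos hstep k))
          _ ≤ ζ ^ 2 * σ ^ 2 * M := by
              apply mul_le_mul_of_nonneg_left _ (by positivity)
              rw [← Finset.sum_mul]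
              calc (∑ i ∈ range k, wgt bt K0 i k) * M ≤ 1 * M :=
                    mul_le_mul_of_nonneg_right (wgt_sum_le_one hbt hK0pos hstep k) hMnn
                _ = M := one_mul M
      apply key.trans
      have hQ : 0 ≤ ζ ^ 2 * σ ^ 2 * ((k : ℝ) ^ (1 - δ)) * (bt / ((k : ℝ) + K0)) / (1 - δ) := by
        apply div_nonneg _ (by linarith)
        apply mul_nonneg (mul_nonneg (by positivity)
          (Real.rpow_nonneg (Nat.cast_nonneg k) _)) (b_nonneg hbt hK0pos hstep k)
      calc ζ ^ 2 * σ ^ 2 * M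
          = 4 * (ζ ^ 2 * σ ^ 2 * ((k : ℝ) ^ (1 - δ)) * (bt / ((k : ℝ) + K0)) / (1 - δ)) := by
            rw [hM]; ring
        _ ≤ 6 * (ζ ^ 2 * σ ^ 2 * ((k : ℝ) ^ (1 - δ)) * (bt / ((k : ℝ) + K0)) / (1 - δ)) := by
            linarith
        _ = 6 * ζ ^ 2 * σ ^ 2 / (1 - δ) * (k : ℝ) ^ (1 - δ) * (bt / ((k : ℝ) + K0)) := by
            ring
  · -- second inequality
    have hpos : (0 : ℝ) < (k : ℝ) + K0 := by positivity
    have hζne : ζ ≠ 0 := ne_of_gt hζ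
    have hrp : (0 : ℝ) < ((k : ℝ) + K0) ^ δ := Real.rpow_pos_of_pos hpos δ
    have key : (k : ℝ) ^ (1 - δ) / ((k : ℝ) + K0) ≤ 1 / ((k : ℝ) + K0) ^ δ := by
      rw [div_le_div_iff₀ hpos hrp]
      calc (k : ℝ) ^ (1 - δ) * ((k : ℝ) + K0) ^ δ
          ≤ ((k : ℝ) + K0) ^ (1 - δ) * ((k : ℝ) + K0) ^ δ :=
            mul_le_mul_of_nonneg_right
              (Real.rpow_le_rpow (Nat.cast_nonneg k) (by linarith) (by linarith))
              hrp.le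
        _ = ((k : ℝ) + K0) ^ ((1 - δ) + δ) := (Real.rpow_add hpos _ _).symm
        _ = 1 * ((k : ℝ) + K0) := by norm_num
    have e1 : 6 * ζ ^ 2 * σ ^ 2 / (1 - δ) * (k : ℝ) ^ (1 - δ) * (bt / ((k : ℝ) + K0))
        = (6 * ζ * σ ^ 2 * β / (1 - δ)) * ((k : ℝ) ^ (1 - δ) / ((k : ℝ) + K0)) := by
      rw [hbtdef]; field_simp
    have e2 : 6 * ζ * σ ^ 2 / (1 - δ) * (β / ((k : ℝ) + K0) ^ δ)
        = (6 * ζ * σ ^ 2 * β / (1 - δ)) * (1 / ((k : ℝ) + K0) ^ δ) := by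
      ring
    rw [e1, e2]
    apply mul_le_mul_of_nonneg_left key
    apply div_nonneg (by positivity) (by linarith)
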